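/- For odd N = 2n+1, the eigenvalue counting function of the Laplacian on SO(2n+1) satisfies N(λ) = (1/(2^n n!)) Σ_{x ∈ 𝕆ⁿ, ‖x‖² ≤ R²} m(x), where 𝕆 denotes the odd integers, R² = 4λ + n(4n²−1)/3, and m(x) = (Π_{0 ≤ i ≤ n−1} (x_{n−i}/(2i+1)) · Π_{0 ≤ i < j ≤ n−1} (x_{n−j}² − x_{n−i}²)/((2j+1)² − (2i+1)²))². -/

import Mathlib

open Finset

open scoped Classical

/-- Weyl's dimension formula multiplicity for SO(2n+1), as a function of the odd
integers `x_j = 2b_j + 2n - 2j + 1` (0-indexed, so `x_j` is `x (j-1)`):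
`m(x) = (Π_i x_{n-i}/(2i+1) · Π_{i<j} (x_{n-j}² − x_{n-i}²)/((2j+1)² − (2i+1)²))²`. -/
noncomputable def multSOodd (n : ℕ) (hn : 0 < n) (x : Fin n → ℤ) : ℝ :=
  ((∏ i ∈ Finset.range n, ((x ⟨n - 1 - i, by omega⟩ : ℤ) : ℝ) / (2 * (i : ℝ) + 1)) *
    ∏ i ∈ Finset.range n, ∏ j ∈ Finset.Ico (i + 1) n,
      (((x ⟨n - 1 - j, by omega⟩ : ℤ) : ℝ) ^ 2 - ((x ⟨n - 1 - i, by omega⟩ : ℤ) : ℝ) ^ 2) /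
        ((2 * (j : ℝ) + 1) ^ 2 - (2 * (i : ℝ) + 1) ^ 2)) ^ 2

noncomputable def CnumSO (n : ℕ) : ℝ :=
  (∏ i ∈ Finset.range n, 1 / (2 * (i : ℝ) + 1)) ^ 2 *
  (∏ i ∈ Finset.range n, ∏ j ∈ Finset.Ico (i + 1) n,
     1 / ((2 * (j : ℝ) + 1) ^ 2 - (2 * (i : ℝ) + 1) ^ 2)) ^ 2

/-- triangle double product as product over a pair finset -/
lemma triangle_prod (n : ℕ) (F : ℕ → ℕ → ℝ) :
    ∏ i ∈ Finset.range n, ∏ j ∈ Finset.Ico (i + 1) n, F i j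
      = ∏ p ∈ ((Finset.range n ×ˢ Finset.range n).filter fun p => p.1 < p.2), F p.1 p.2 := by
  rw [Finset.prod_sigma']
  refine Finset.prod_nbij' (fun a => (a.1, a.2)) (fun p => ⟨p.1, p.2⟩) ?_ ?_ ?_ ?_ ?_
  · intro a ha
    simp only [Finset.mem_sigma, Finset.mem_range, Finset.mem_Ico] at ha
    simp only [Finset.mem_filter, Finset.mem_product, Finset.mem_range]
    omega
  · intro p hp
    simp only [Finset.mem_filter, Finset.mem_product, Finset.mem_range] at hp
    simp only [Finset.mem_sigma, Finset.mem_range, Finset.mem_Ico]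
    omega
  · intro a _; rfl
  · intro p _; rfl
  · intro a _; rfl

/-- reflection of the triangle -/
lemma triangle_reflect (n : ℕ) (Q : ℕ → ℝ) :
    ∏ i ∈ Finset.range n, ∏ j ∈ Finset.Ico (i + 1) n, (Q (n - 1 - j) - Q (n - 1 - i))
      = ∏ i ∈ Finset.range n, ∏ j ∈ Finset.Ico (i + 1) n, (Q i - Q j) := by
  rw [triangle_prod, triangle_prod]
  refine Finset.prod_nbij' (fun p => (n - 1 - p.2, n - 1 - p.1)) (fun p => (n - 1 - p.2, n - 1 - p.1)) ?_ ?_ ?_ ?_ ?_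
  · intro p hp
    simp only [Finset.mem_filter, Finset.mem_product, Finset.mem_range] at hp ⊢
    omega
  · intro p hp
    simp only [Finset.mem_filter, Finset.mem_product, Finset.mem_range] at hp ⊢
    omega
  · intro p hp
    simp only [Finset.mem_filter, Finset.mem_product, Finset.mem_range] at hp
    ext <;> simp <;> omega
  · intro p hp
    simp only [Finset.mem_filter, Finset.mem_product, Finset.mem_range] at hp
    ext <;> simp <;> omega
  · intro p _; rfl

/-- product over strict pairs squared equals abs of offDiag product -/
lemma sq_prod_pairs (n : ℕ) (q : Fin n → ℝ) :
    (∏ p ∈ ((Finset.univ : Finset (Fin n)) ×ˢ Finset.univ).filter (fun p => p.1 < p.2),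
        (q p.1 - q p.2)) ^ 2
      = |∏ p ∈ (Finset.univ : Finset (Fin n)).offDiag, (q p.1 - q p.2)| := by
  have hsplit : (Finset.univ : Finset (Fin n)).offDiag
      = ((Finset.univ : Finset (Fin n)) ×ˢ Finset.univ).filter (fun p => p.1 < p.2)
        ∪ ((Finset.univ : Finset (Fin n)) ×ˢ Finset.univ).filter (fun p => p.2 < p.1) := by
    ext p
    simp only [Finset.mem_offDiag, Finset.mem_union, Finset.mem_filter, Finset.mem_product,
      Finset.mem_univ, true_and]
    exact ne_iff_lt_or_gt
  have hdisj : Disjoint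
      (((Finset.univ : Finset (Fin n)) ×ˢ Finset.univ).filter (fun p => p.1 < p.2))
      (((Finset.univ : Finset (Fin n)) ×ˢ Finset.univ).filter (fun p => p.2 < p.1)) := by
    rw [Finset.disjoint_left]
    intro p hp hp'
    simp only [Finset.mem_filter] at hp hp'
    exact absurd hp'.2 (not_lt.mpr hp.2.le)
  have hswap : ∏ p ∈ ((Finset.univ : Finset (Fin n)) ×ˢ Finset.univ).filter (fun p => p.2 < p.1),
      (q p.1 - q p.2)
      = ∏ p ∈ ((Finset.univ : Finset (Fin n)) ×ˢ Finset.univ).filter (fun p => p.1 < p.2),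
      (q p.2 - q p.1) := by
    refine Finset.prod_nbij' Prod.swap Prod.swap ?_ ?_ ?_ ?_ ?_ <;>
      simp [Finset.mem_filter]
  rw [hsplit, Finset.prod_union hdisj, hswap, ← Finset.prod_mul_distrib, Finset.abs_prod]
  rw [sq, ← Finset.prod_mul_distrib]
  refine Finset.prod_congr rfl fun p _ => ?_
  have : (q p.1 - q p.2) * (q p.2 - q p.1) = -((q p.1 - q p.2) * (q p.1 - q p.2)) := by ring
  rw [this, abs_neg, abs_mul_self]

/-- Fin-pairs version of the ℕ strict-pairs product -/
lemma pairs_nat_to_fin (n : ℕ) (q : Fin n → ℝ) (Q : ℕ → ℝ)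
    (hQ : ∀ i : Fin n, Q i.val = q i) :
    ∏ p ∈ ((Finset.range n ×ˢ Finset.range n).filter fun p => p.1 < p.2), (Q p.1 - Q p.2)
      = ∏ p ∈ ((Finset.univ : Finset (Fin n)) ×ˢ Finset.univ).filter (fun p => p.1 < p.2),
          (q p.1 - q p.2) := by
  refine Finset.prod_bij (fun p hp => (⟨p.1, ?_⟩, ⟨p.2, ?_⟩)) ?_ ?_ ?_ ?_
  · exact Finset.mem_range.mp (Finset.mem_product.mp (Finset.mem_filter.mp hp).1).1
  · exact Finset.mem_range.mp (Finset.mem_product.mp (Finset.mem_filter.mp hp).1).2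
  · intro p hp
    simp only [Finset.mem_filter, Finset.mem_product, Finset.mem_univ, true_and, and_true]
    exact (Finset.mem_filter.mp hp).2
  · intro p hp p' hp' h
    simp only [Prod.mk.injEq, Fin.mk.injEq] at h
    exact Prod.ext h.1 h.2
  · intro p hp
    refine ⟨(p.1.val, p.2.val), ?_, rfl⟩
    simp only [Finset.mem_filter, Finset.mem_product, Finset.mem_range] at hp ⊢
    exact ⟨⟨p.1.isLt, p.2.isLt⟩, hp.2⟩
  · intro p hp
    have h1 := Finset.mem_range.mp (Finset.mem_product.mp (Finset.mem_filter.mp hp).1).1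
    have h2 := Finset.mem_range.mp (Finset.mem_product.mp (Finset.mem_filter.mp hp).1).2
    show Q p.1 - Q p.2 = q ⟨p.1, h1⟩ - q ⟨p.2, h2⟩
    rw [← hQ ⟨p.1, h1⟩, ← hQ ⟨p.2, h2⟩]

lemma mult_eq_normal (n : ℕ) (hn : 0 < n) (x : Fin n → ℤ) :
    multSOodd n hn x = CnumSO n * ((∏ i : Fin n, ((x i : ℤ) : ℝ) ^ 2) *
      |∏ p ∈ (Finset.univ : Finset (Fin n)).offDiag,
        (((x p.1 : ℤ) : ℝ) ^ 2 - ((x p.2 : ℤ) : ℝ) ^ 2)|) := by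
  classical
  set X : ℕ → ℝ := fun i => if h : i < n then ((x ⟨i, h⟩ : ℤ) : ℝ) else 1 with hX
  have hXv : ∀ (i : ℕ) (h : i < n), X i = ((x ⟨i, h⟩ : ℤ) : ℝ) := by
    intro i h; simp [hX, h]
  set Q : ℕ → ℝ := fun i => (X i) ^ 2 with hQdef
  set q : Fin n → ℝ := fun i => ((x i : ℤ) : ℝ) ^ 2 with hq
  have hQq : ∀ i : Fin n, Q i.val = q i := by
    intro i; simp [hQdef, hq, hXv i.val i.isLt]
  -- rewrite A part
  have hA : (∏ i ∈ Finset.range n, ((x ⟨n - 1 - i, by omega⟩ : ℤ) : ℝ) / (2 * (i : ℝ) + 1))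
      = (∏ i : Fin n, ((x i : ℤ) : ℝ)) * ∏ i ∈ Finset.range n, 1 / (2 * (i : ℝ) + 1) := by
    have h1 : ∀ i ∈ Finset.range n,
        ((x ⟨n - 1 - i, by omega⟩ : ℤ) : ℝ) / (2 * (i : ℝ) + 1)
          = X (n - 1 - i) * (1 / (2 * (i : ℝ) + 1)) := by
      intro i hi
      rw [hXv (n - 1 - i) (by omega)]
      ring
    rw [Finset.prod_congr rfl h1, Finset.prod_mul_distrib, Finset.prod_range_reflect]
    congr 1
    rw [← Fin.prod_univ_eq_prod_range]
    exact Finset.prod_congr rfl fun i _ => hXv i.val i.isLt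
  -- rewrite B part
  have hB : (∏ i ∈ Finset.range n, ∏ j ∈ Finset.Ico (i + 1) n,
      (((x ⟨n - 1 - j, by omega⟩ : ℤ) : ℝ) ^ 2 - ((x ⟨n - 1 - i, by omega⟩ : ℤ) : ℝ) ^ 2) /
        ((2 * (j : ℝ) + 1) ^ 2 - (2 * (i : ℝ) + 1) ^ 2))
      = (∏ p ∈ ((Finset.univ : Finset (Fin n)) ×ˢ Finset.univ).filter (fun p => p.1 < p.2),
          (q p.1 - q p.2))
        * ∏ i ∈ Finset.range n, ∏ j ∈ Finset.Ico (i + 1) n,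
            1 / ((2 * (j : ℝ) + 1) ^ 2 - (2 * (i : ℝ) + 1) ^ 2) := by
    have h1 : ∀ i ∈ Finset.range n, ∀ j ∈ Finset.Ico (i + 1) n,
        (((x ⟨n - 1 - j, by omega⟩ : ℤ) : ℝ) ^ 2 - ((x ⟨n - 1 - i, by omega⟩ : ℤ) : ℝ) ^ 2) /
          ((2 * (j : ℝ) + 1) ^ 2 - (2 * (i : ℝ) + 1) ^ 2)
        = (Q (n - 1 - j) - Q (n - 1 - i)) * (1 / ((2 * (j : ℝ) + 1) ^ 2 - (2 * (i : ℝ) + 1) ^ 2)) := by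
      intro i hi j hj
      rw [hQdef]
      simp only
      rw [hXv (n - 1 - j) (by omega), hXv (n - 1 - i) (by omega)]
      ring
    calc ∏ i ∈ Finset.range n, ∏ j ∈ Finset.Ico (i + 1) n,
        (((x ⟨n - 1 - j, by omega⟩ : ℤ) : ℝ) ^ 2 - ((x ⟨n - 1 - i, by omega⟩ : ℤ) : ℝ) ^ 2) /
          ((2 * (j : ℝ) + 1) ^ 2 - (2 * (i : ℝ) + 1) ^ 2)
        = ∏ i ∈ Finset.range n, ∏ j ∈ Finset.Ico (i + 1) n,
            (Q (n - 1 - j) - Q (n - 1 - i)) * (1 / ((2 * (j : ℝ) + 1) ^ 2 - (2 * (i : ℝ) + 1) ^ 2)) := by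
          refine Finset.prod_congr rfl fun i hi => Finset.prod_congr rfl fun j hj => h1 i hi j hj
      _ = (∏ i ∈ Finset.range n, ∏ j ∈ Finset.Ico (i + 1) n, (Q (n - 1 - j) - Q (n - 1 - i)))
            * ∏ i ∈ Finset.range n, ∏ j ∈ Finset.Ico (i + 1) n,
                1 / ((2 * (j : ℝ) + 1) ^ 2 - (2 * (i : ℝ) + 1) ^ 2) := by
          rw [← Finset.prod_mul_distrib]
          exact Finset.prod_congr rfl fun i _ => Finset.prod_mul_distrib
      _ = _ := by
          rw [triangle_reflect, triangle_prod, pairs_nat_to_fin n q Q hQq]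
  rw [multSOodd, hA, hB]
  rw [← sq_prod_pairs n q]
  have hxsq : (∏ i : Fin n, ((x i : ℤ) : ℝ)) ^ 2 = ∏ i : Fin n, ((x i : ℤ) : ℝ) ^ 2 := by
    rw [← Finset.prod_pow]
  rw [CnumSO, hq]
  ring_nf
  rw [← hxsq]
  ring

lemma offDiag_perm_prod {n : ℕ} (σ : Equiv.Perm (Fin n)) (q : Fin n → ℝ) :
    ∏ p ∈ (Finset.univ : Finset (Fin n)).offDiag, (q (σ p.1) - q (σ p.2))
      = ∏ p ∈ (Finset.univ : Finset (Fin n)).offDiag, (q p.1 - q p.2) := by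
  refine Finset.prod_nbij' (fun p => (σ p.1, σ p.2)) (fun p => (σ⁻¹ p.1, σ⁻¹ p.2)) ?_ ?_ ?_ ?_ ?_
  · intro p hp
    simp only [Finset.mem_offDiag, Finset.mem_univ, true_and] at hp ⊢
    exact fun h => hp (σ.injective h)
  · intro p hp
    simp only [Finset.mem_offDiag, Finset.mem_univ, true_and] at hp ⊢
    exact fun h => hp (σ⁻¹.injective h)
  · intro p _; simp
  · intro p _; simp
  · intro p _; rfl

lemma mult_sign_perm (n : ℕ) (hn : 0 < n) (ε : Fin n → Bool) (σ : Equiv.Perm (Fin n))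
    (y : Fin n → ℤ) :
    multSOodd n hn (fun i => (if ε i then 1 else -1) * y (σ i)) = multSOodd n hn y := by
  have hsq : ∀ i : Fin n, (((if ε i then (1 : ℤ) else -1) * y (σ i) : ℤ) : ℝ) ^ 2
      = ((y (σ i) : ℤ) : ℝ) ^ 2 := by
    intro i
    cases h : ε i <;> simp
  have e1 : (∏ i : Fin n, (((if ε i then (1 : ℤ) else -1) * y (σ i) : ℤ) : ℝ) ^ 2)
      = ∏ i : Fin n, ((y i : ℤ) : ℝ) ^ 2 := by
    rw [Finset.prod_congr rfl fun i _ => hsq i]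
    exact Equiv.prod_comp σ (fun i => ((y i : ℤ) : ℝ) ^ 2)
  have e2 : (∏ p ∈ (Finset.univ : Finset (Fin n)).offDiag,
        ((((if ε p.1 then (1 : ℤ) else -1) * y (σ p.1) : ℤ) : ℝ) ^ 2
          - (((if ε p.2 then (1 : ℤ) else -1) * y (σ p.2) : ℤ) : ℝ) ^ 2))
      = ∏ p ∈ (Finset.univ : Finset (Fin n)).offDiag,
          (((y p.1 : ℤ) : ℝ) ^ 2 - ((y p.2 : ℤ) : ℝ) ^ 2) := by
    rw [Finset.prod_congr rfl fun (p : Fin n × Fin n) _ => by rw [hsq p.1, hsq p.2]]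
    exact offDiag_perm_prod σ (fun i => ((y i : ℤ) : ℝ) ^ 2)
  rw [mult_eq_normal, mult_eq_normal, e1, e2]

lemma mult_eq_zero_of_sq_eq (n : ℕ) (hn : 0 < n) (x : Fin n → ℤ) {a b : Fin n}
    (hab : a ≠ b) (h : x a ^ 2 = x b ^ 2) : multSOodd n hn x = 0 := by
  rw [mult_eq_normal]
  have hz : ∏ p ∈ (Finset.univ : Finset (Fin n)).offDiag,
      (((x p.1 : ℤ) : ℝ) ^ 2 - ((x p.2 : ℤ) : ℝ) ^ 2) = 0 := by
    refine Finset.prod_eq_zero (i := (a, b)) ?_ ?_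
    · exact Finset.mem_offDiag.mpr ⟨Finset.mem_univ _, Finset.mem_univ _, hab⟩
    · have : ((x a : ℤ) : ℝ) ^ 2 = ((x b : ℤ) : ℝ) ^ 2 := by exact_mod_cast congrArg (Int.cast : ℤ → ℝ) h
      simpa using sub_eq_zero_of_eq this
  rw [hz, abs_zero, mul_zero, mul_zero]

lemma strictAnti_of_adj {n : ℕ} {x : Fin n → ℤ}
    (h : ∀ i : ℕ, ∀ hh : i + 1 < n, x ⟨i + 1, hh⟩ < x ⟨i, Nat.lt_of_succ_lt hh⟩) : StrictAnti x := by
  have key : ∀ k : ℕ, ∀ i j : Fin n, j.val = i.val + k + 1 → x j < x i := by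
    intro k
    induction k with
    | zero =>
      intro i j hj
      have hlt : i.val + 1 < n := by omega
      have h1 : j = ⟨i.val + 1, hlt⟩ := Fin.ext (show j.val = i.val + 1 by omega)
      rw [h1]
      exact h i.val hlt
    | succ k ih =>
      intro i j hj
      have hlt : i.val + 1 < n := by omega
      have h1 : x j < x ⟨i.val + 1, hlt⟩ :=
        ih ⟨i.val + 1, hlt⟩ j (show j.val = (i.val + 1) + k + 1 by omega)
      exact h1.trans (h i.val hlt)
  intro i j hij
  exact key (j.val - i.val - 1) i j (by omega)

def PhiSO (n : ℕ) (a : (Fin n → Bool) × Equiv.Perm (Fin n) × (Fin n → ℤ)) : Fin n → ℤ :=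
  fun i => (if a.1 i then 1 else -1) * a.2.2 (a.2.1 i)

noncomputable def PsiSO (n : ℕ) (x : Fin n → ℤ) :
    (Fin n → Bool) × Equiv.Perm (Fin n) × (Fin n → ℤ) :=
  (fun i => decide (0 < x i),
   (Tuple.sort (fun i => |x i|))⁻¹.trans Fin.revPerm,
   fun i => |x (Tuple.sort (fun i => |x i|) (Fin.rev i))|)

lemma mult_PhiSO (n : ℕ) (hn : 0 < n)
    (a : (Fin n → Bool) × Equiv.Perm (Fin n) × (Fin n → ℤ)) :
    multSOodd n hn (PhiSO n a) = multSOodd n hn a.2.2 :=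
  mult_sign_perm n hn a.1 a.2.1 a.2.2

lemma PhiPsi (n : ℕ) (x : Fin n → ℤ) (hx : ∀ i, x i ≠ 0) : PhiSO n (PsiSO n x) = x := by
  funext i
  show (if decide (0 < x i) then (1 : ℤ) else -1) *
      |x (Tuple.sort (fun i => |x i|)
        (Fin.rev (Fin.revPerm ((Tuple.sort (fun i => |x i|))⁻¹ i))))| = x i
  rw [show Fin.revPerm ((Tuple.sort (fun i => |x i|))⁻¹ i)
      = Fin.rev ((Tuple.sort (fun i => |x i|))⁻¹ i) from rfl, Fin.rev_rev,
    Equiv.Perm.inv_def, Equiv.apply_symm_apply]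
  rcases (hx i).lt_or_gt with h | h
  · rw [abs_of_neg h]
    simp [not_lt.mpr h.le]
  · rw [abs_of_pos h]
    simp [h]

lemma abs_PhiSO (n : ℕ) (ε : Fin n → Bool) (σ : Equiv.Perm (Fin n)) (y : Fin n → ℤ)
    (hpos : ∀ i, 0 < y i) : ∀ i, |PhiSO n (ε, σ, y) i| = y (σ i) := by
  intro i
  show |(if ε i then (1 : ℤ) else -1) * y (σ i)| = y (σ i)
  cases ε i <;> simp [abs_of_pos (hpos (σ i))]

lemma sort_PhiSO (n : ℕ) (ε : Fin n → Bool) (σ : Equiv.Perm (Fin n)) (y : Fin n → ℤ)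
    (hy : StrictAnti y) (hpos : ∀ i, 0 < y i) :
    Tuple.sort (fun i => |PhiSO n (ε, σ, y) i|) = Fin.revPerm.trans σ⁻¹ := by
  have habs : (fun i => |PhiSO n (ε, σ, y) i|) = fun i => y (σ i) :=
    funext (abs_PhiSO n ε σ y hpos)
  rw [habs]
  have hmono : Monotone ((fun i => y (σ i)) ∘ (Fin.revPerm.trans σ⁻¹)) := by
    have hc : ((fun i => y (σ i)) ∘ (Fin.revPerm.trans σ⁻¹)) = fun i => y (Fin.rev i) := by
      funext i
      simp [Equiv.trans_apply]
    rw [hc]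
    intro i j hij
    exact hy.antitone (Fin.rev_le_rev.mpr hij)
  have h1 : (fun i => y (σ i)) ∘ Tuple.sort (fun i => y (σ i))
      = (fun i => y (σ i)) ∘ (Fin.revPerm.trans σ⁻¹) :=
    Tuple.unique_monotone (Tuple.monotone_sort _) hmono
  have hinj : Function.Injective (fun i => y (σ i)) := hy.injective.comp σ.injective
  apply Equiv.ext
  intro i
  exact hinj (congrFun h1 i)

lemma PsiPhi (n : ℕ) (ε : Fin n → Bool) (σ : Equiv.Perm (Fin n)) (y : Fin n → ℤ)
    (hy : StrictAnti y) (hpos : ∀ i, 0 < y i) :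
    PsiSO n (PhiSO n (ε, σ, y)) = (ε, σ, y) := by
  have hτ := sort_PhiSO n ε σ y hy hpos
  have habs := abs_PhiSO n ε σ y hpos
  unfold PsiSO
  simp only [Prod.mk.injEq]
  refine ⟨?_, ?_, ?_⟩
  · funext i
    show decide (0 < (if ε i then (1 : ℤ) else -1) * y (σ i)) = ε i
    have := hpos (σ i)
    cases h : ε i <;> simp <;> omega
  · apply Equiv.ext
    intro i
    show Fin.revPerm ((Tuple.sort (fun i => |PhiSO n (ε, σ, y) i|))⁻¹ i) = σ i
    rw [hτ]
    show Fin.rev ((Fin.revPerm.trans σ⁻¹).symm i) = σ i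
    simp [Equiv.symm_trans_apply, Fin.rev_rev, Equiv.Perm.inv_def]
  · funext i
    show |PhiSO n (ε, σ, y) (Tuple.sort (fun i => |PhiSO n (ε, σ, y) i|) (Fin.rev i))| = y i
    rw [hτ]
    rw [habs]
    show y (σ ((Fin.revPerm.trans σ⁻¹) (Fin.rev i))) = y i
    simp [Equiv.trans_apply, Fin.rev_rev]

lemma main_helper (n : ℕ) (hn : 0 < n) (B : ℤ) (R2 : ℝ) :
    (∑ x ∈ (Fintype.piFinset fun _ : Fin n =>
          Finset.Icc (-B) B).filter
        (fun x => (∀ i, Odd (x i)) ∧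
          (∀ i : ℕ, ∀ h : i + 1 < n, x ⟨i + 1, h⟩ < x ⟨i, Nat.lt_of_succ_lt h⟩) ∧
          0 < x ⟨n - 1, (Nat.pred_lt_self hn : n.pred < n)⟩ ∧
          ∑ i, ((x i : ℤ) : ℝ) ^ 2 ≤ R2),
        multSOodd n hn x)
      = (1 / ((2 : ℝ) ^ n * (n.factorial : ℝ))) *
        ∑ x ∈ (Fintype.piFinset fun _ : Fin n =>
            Finset.Icc (-B) B).filter
          (fun x => (∀ i, Odd (x i)) ∧ ∑ i, ((x i : ℤ) : ℝ) ^ 2 ≤ R2),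
          multSOodd n hn x := by
  classical
  set P : Finset (Fin n → ℤ) := Fintype.piFinset fun _ : Fin n => Finset.Icc (-B) B with hP
  set S : Finset (Fin n → ℤ) :=
    P.filter (fun x => (∀ i, Odd (x i)) ∧ ∑ i, ((x i : ℤ) : ℝ) ^ 2 ≤ R2) with hS
  set D : Finset (Fin n → ℤ) :=
    P.filter (fun x => (∀ i, Odd (x i)) ∧
      (∀ i : ℕ, ∀ h : i + 1 < n, x ⟨i + 1, h⟩ < x ⟨i, Nat.lt_of_succ_lt h⟩) ∧
      0 < x ⟨n - 1, (Nat.pred_lt_self hn : n.pred < n)⟩ ∧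
      ∑ i, ((x i : ℤ) : ℝ) ^ 2 ≤ R2) with hD
  set G : Finset (Fin n → ℤ) :=
    S.filter (fun x => Function.Injective fun i => x i ^ 2) with hG
  -- facts about members of D
  have hDfacts : ∀ y ∈ D, (∀ i, -B ≤ y i ∧ y i ≤ B) ∧ (∀ i, Odd (y i)) ∧ StrictAnti y ∧
      (∀ i, 0 < y i) ∧ ∑ i, ((y i : ℤ) : ℝ) ^ 2 ≤ R2 := by
    intro y hy
    rw [hD, Finset.mem_filter] at hy
    obtain ⟨hyP, hodd, hadj, hpos, hsum⟩ := hy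
    have hbd : ∀ i, -B ≤ y i ∧ y i ≤ B := by
      intro i
      have := (Fintype.mem_piFinset).mp hyP i
      exact Finset.mem_Icc.mp this
    have hanti : StrictAnti y := strictAnti_of_adj hadj
    refine ⟨hbd, hodd, hanti, ?_, hsum⟩
    intro i
    refine lt_of_lt_of_le hpos (hanti.antitone ?_)
    show i ≤ ⟨n - 1, (Nat.pred_lt_self hn : n.pred < n)⟩
    rw [Fin.le_def]
    have := i.isLt
    simp only
    omega
  -- facts about members of G
  have hGfacts : ∀ x ∈ G, (∀ i, -B ≤ x i ∧ x i ≤ B) ∧ (∀ i, Odd (x i)) ∧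
      (∑ i, ((x i : ℤ) : ℝ) ^ 2 ≤ R2) ∧ (Function.Injective fun i => x i ^ 2) := by
    intro x hx
    rw [hG, Finset.mem_filter, hS, Finset.mem_filter] at hx
    obtain ⟨⟨hxP, hodd, hsum⟩, hinj⟩ := hx
    refine ⟨?_, hodd, hsum, hinj⟩
    intro i
    exact Finset.mem_Icc.mp ((Fintype.mem_piFinset).mp hxP i)
  have hodd_ne : ∀ x : Fin n → ℤ, (∀ i, Odd (x i)) → ∀ i, x i ≠ 0 := by
    intro x hodd i h
    have := hodd i
    rw [h] at this
    exact (by decide : ¬ Odd (0 : ℤ)) this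
  -- Step 1 : sum over S equals sum over G
  have step1 : ∑ x ∈ S, multSOodd n hn x = ∑ x ∈ G, multSOodd n hn x := by
    refine (Finset.sum_subset (Finset.filter_subset _ S) ?_).symm
    intro x hxS hxG
    rw [Finset.mem_filter] at hxG
    have hninj : ¬ Function.Injective fun i => x i ^ 2 := fun h => hxG ⟨hxS, h⟩
    rw [Function.not_injective_iff] at hninj
    obtain ⟨a, b, hab, hne⟩ := hninj
    exact mult_eq_zero_of_sq_eq n hn x hne hab
  -- Step 2 : sum over G equals sum over the triple set
  have step2 : ∑ x ∈ G, multSOodd n hn x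
      = ∑ a ∈ (Finset.univ : Finset (Fin n → Bool)) ×ˢ
          ((Finset.univ : Finset (Equiv.Perm (Fin n))) ×ˢ D), multSOodd n hn a.2.2 := by
    refine Finset.sum_nbij' (PsiSO n) (PhiSO n) ?_ ?_ ?_ ?_ ?_
    · -- Psi maps G into the triple set
      intro x hx
      obtain ⟨hbd, hodd, hsum, hinj⟩ := hGfacts x hx
      have hx0 : ∀ i, x i ≠ 0 := hodd_ne x hodd
      set a : Fin n → ℤ := fun i => |x i| with ha
      set τ : Equiv.Perm (Fin n) := Tuple.sort a with hτ
      have hainj : Function.Injective a := by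
        intro i j h
        apply hinj
        show x i ^ 2 = x j ^ 2
        rw [← sq_abs (x i), ← sq_abs (x j)]
        exact congrArg (· ^ 2) h
      have hstrict : StrictMono (a ∘ τ) :=
        (Tuple.monotone_sort a).strictMono_of_injective (hainj.comp τ.injective)
      have hyanti : StrictAnti fun i => a (τ (Fin.rev i)) := by
        intro i j hij
        exact hstrict (Fin.rev_lt_rev.mpr hij)
      have hypos : ∀ i, 0 < a (τ (Fin.rev i)) := fun i => abs_pos.mpr (hx0 _)
      rw [Finset.mem_product, Finset.mem_product]
      refine ⟨Finset.mem_univ _, Finset.mem_univ _, ?_⟩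
      show (fun i => a (τ (Fin.rev i))) ∈ D
      rw [hD, Finset.mem_filter]
      refine ⟨?_, ?_, ?_, ?_, ?_⟩
      · rw [Fintype.mem_piFinset]
        intro i
        rw [Finset.mem_Icc]
        have h1 := hbd (τ (Fin.rev i))
        constructor
        · exact le_trans h1.1 (le_abs_self _)
        · exact abs_le.mpr h1
      · intro i
        exact odd_abs.mpr (hodd _)
      · intro i h
        exact hyanti (show (⟨i, by omega⟩ : Fin n) < ⟨i + 1, h⟩ from by
          rw [Fin.lt_def]; simp)
      · exact hypos _
      · have hpt : ∀ i : Fin n, (((a (τ (Fin.rev i)) : ℤ) : ℝ)) ^ 2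
            = ((x ((Fin.revPerm.trans τ) i) : ℤ) : ℝ) ^ 2 := by
          intro i
          show ((|x (τ (Fin.rev i))| : ℤ) : ℝ) ^ 2 = _
          rw [Int.cast_abs, sq_abs]
          rfl
        calc ∑ i, (((a (τ (Fin.rev i)) : ℤ) : ℝ)) ^ 2
            = ∑ i, ((x ((Fin.revPerm.trans τ) i) : ℤ) : ℝ) ^ 2 :=
              Finset.sum_congr rfl fun i _ => hpt i
          _ = ∑ i, ((x i : ℤ) : ℝ) ^ 2 :=
              Equiv.sum_comp (Fin.revPerm.trans τ) (fun j => ((x j : ℤ) : ℝ) ^ 2)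
          _ ≤ R2 := hsum
    · -- Phi maps the triple set into G
      intro a ha
      rw [Finset.mem_product, Finset.mem_product] at ha
      obtain ⟨-, -, hyD⟩ := ha
      obtain ⟨hbd, hodd, hyanti, hypos, hsum⟩ := hDfacts a.2.2 hyD
      obtain ⟨ε, σ, y⟩ := a
      simp only at hbd hodd hyanti hypos hsum
      have hsq : ∀ i, PhiSO n (ε, σ, y) i ^ 2 = y (σ i) ^ 2 := by
        intro i
        show ((if ε i then (1 : ℤ) else -1) * y (σ i)) ^ 2 = _
        cases ε i <;> simp [mul_pow]
      rw [hG, Finset.mem_filter, hS, Finset.mem_filter]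
      refine ⟨⟨?_, ?_, ?_⟩, ?_⟩
      · rw [Fintype.mem_piFinset]
        intro i
        rw [Finset.mem_Icc]
        have h1 := hbd (σ i)
        have h2 := hypos (σ i)
        show -B ≤ (if ε i then (1 : ℤ) else -1) * y (σ i) ∧
          (if ε i then (1 : ℤ) else -1) * y (σ i) ≤ B
        cases ε i <;> simp <;> omega
      · intro i
        show Odd ((if ε i then (1 : ℤ) else -1) * y (σ i))
        cases ε i
        · rw [if_neg (by simp), neg_one_mul]
          exact (hodd (σ i)).neg
        · rw [if_pos rfl, one_mul]
          exact hodd (σ i)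
      · have hpt : ∀ i : Fin n, ((PhiSO n (ε, σ, y) i : ℤ) : ℝ) ^ 2
            = ((y (σ i) : ℤ) : ℝ) ^ 2 := by
          intro i
          have h := congrArg (fun t : ℤ => (t : ℝ)) (hsq i)
          push_cast at h
          exact h
        calc ∑ i, ((PhiSO n (ε, σ, y) i : ℤ) : ℝ) ^ 2
            = ∑ i, ((y (σ i) : ℤ) : ℝ) ^ 2 := Finset.sum_congr rfl fun i _ => hpt i
          _ = ∑ i, ((y i : ℤ) : ℝ) ^ 2 := Equiv.sum_comp σ (fun j => ((y j : ℤ) : ℝ) ^ 2)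
          _ ≤ R2 := hsum
      · intro i j h
        simp only at h
        rw [hsq i, hsq j] at h
        have hz : (y (σ i) - y (σ j)) * (y (σ i) + y (σ j)) = 0 := by ring_nf; linarith [h]
        rcases mul_eq_zero.mp hz with h' | h'
        · have : y (σ i) = y (σ j) := by omega
          exact σ.injective (hyanti.injective this)
        · have := hypos (σ i); have := hypos (σ j); omega
    · -- left inverse
      intro x hx
      exact PhiPsi n x (hodd_ne x (hGfacts x hx).2.1)
    · -- right inverse
      intro a ha
      rw [Finset.mem_product, Finset.mem_product] at ha
      obtain ⟨-, -, hyD⟩ := ha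
      obtain ⟨-, -, hyanti, hypos, -⟩ := hDfacts a.2.2 hyD
      obtain ⟨ε, σ, y⟩ := a
      exact PsiPhi n ε σ y hyanti hypos
    · -- equal values
      intro x hx
      conv_lhs => rw [← PhiPsi n x (hodd_ne x (hGfacts x hx).2.1)]
      exact mult_PhiSO n hn (PsiSO n x)
  -- Step 3 : counting
  have step3 : ∑ a ∈ (Finset.univ : Finset (Fin n → Bool)) ×ˢ
      ((Finset.univ : Finset (Equiv.Perm (Fin n))) ×ˢ D), multSOodd n hn a.2.2
      = ((2 : ℝ) ^ n * (n.factorial : ℝ)) * ∑ y ∈ D, multSOodd n hn y := by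
    have hinner : ∑ b ∈ (Finset.univ : Finset (Equiv.Perm (Fin n))) ×ˢ D,
        multSOodd n hn b.2 = (n.factorial : ℝ) * ∑ y ∈ D, multSOodd n hn y := by
      rw [Finset.sum_product]
      show ∑ _σ : Equiv.Perm (Fin n), ∑ y ∈ D, multSOodd n hn y = _
      rw [Finset.sum_const, Finset.card_univ, Fintype.card_perm, Fintype.card_fin,
        nsmul_eq_mul]
    rw [Finset.sum_product]
    show ∑ _ε : Fin n → Bool, (∑ b ∈ (Finset.univ : Finset (Equiv.Perm (Fin n))) ×ˢ D,
      multSOodd n hn b.2) = _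
    rw [Finset.sum_const, Finset.card_univ, hinner]
    have hcard : Fintype.card (Fin n → Bool) = 2 ^ n := by
      simp [Fintype.card_fun]
    rw [hcard, nsmul_eq_mul]
    push_cast
    ring
  have htotal : ∑ x ∈ S, multSOodd n hn x
      = ((2 : ℝ) ^ n * (n.factorial : ℝ)) * ∑ y ∈ D, multSOodd n hn y := by
    rw [step1, step2, step3]
  show ∑ x ∈ D, multSOodd n hn x = _
  have h2 : ((2 : ℝ) ^ n * (n.factorial : ℝ)) ≠ 0 := by
    positivity
  rw [htotal, one_div, inv_mul_cancel_left₀ h2]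

/-- Lattice sum expression for the eigenvalue counting function of the Laplacian on
`SO(2n+1)`: eigenvalues are indexed by odd `x_1 > x_2 > ⋯ > x_n > 0` (coming from
highest weights `b_1 ≥ ⋯ ≥ b_n ≥ 0` via `x_j = 2b_j + 2n - 2j + 1`) with eigenvalue
`(1/4)Σ x_j² − n(4n²−1)/12` and multiplicity `m(x)`; then
`N(λ) = (1/(2^n n!)) Σ_{x ∈ 𝕆ⁿ, ‖x‖² ≤ R²} m(x)` with `R² = 4λ + n(4n²−1)/3`,
where `𝕆` denotes the odd integers. -/
theorem weyl_lattice_sum_SOodd (n : ℕ) (hn : 0 < n) (lam : ℝ) (hlam : 0 ≤ lam)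
    (R : ℝ) (hR : R = Real.sqrt (4 * lam + (n : ℝ) * (4 * (n : ℝ) ^ 2 - 1) / 3)) :
    (∑ x ∈ (Fintype.piFinset fun _ : Fin n =>
          Finset.Icc (-(⌊R⌋₊ : ℤ)) (⌊R⌋₊ : ℤ)).filter
        (fun x => (∀ i, Odd (x i)) ∧
          (∀ i : ℕ, ∀ h : i + 1 < n, x ⟨i + 1, by omega⟩ < x ⟨i, by omega⟩) ∧
          0 < x ⟨n - 1, by omega⟩ ∧
          ∑ i, ((x i : ℤ) : ℝ) ^ 2 ≤ R ^ 2),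
        multSOodd n hn x)
      = (1 / ((2 : ℝ) ^ n * (n.factorial : ℝ))) *
        ∑ x ∈ (Fintype.piFinset fun _ : Fin n =>
            Finset.Icc (-(⌊R⌋₊ : ℤ)) (⌊R⌋₊ : ℤ)).filter
          (fun x => (∀ i, Odd (x i)) ∧ ∑ i, ((x i : ℤ) : ℝ) ^ 2 ≤ R ^ 2),
          multSOodd n hn x := by
  exact main_helper n hn (⌊R⌋₊ : ℤ) (R ^ 2)
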